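/- arXiv:1403.3182 — 3 statements merged into one kernel-verified Lean document; each statement's English description precedes it below -/
import Mathlib

section
/- Let 1 < λ < 2, g₀ a probability density, g(t) the solution of the fractional diffusion equation with ĝ(ξ,t) = e^{-|ξ|^λ t} ĝ₀(ξ), and g_ε(t) the solution of the Rosenau approximation with ĝ_ε(ξ,t) = e^{-t|ξ|^λ/(1+|εξ|^λ)} ĝ₀(ξ). Then for any 0 < s < λ there exists a constant C = C(λ,s) > 0 such that d_s(g(t), g_ε(t)) ≤ C t^{s/(2λ)} ε^{s/2} for all t > 0 and ε > 0. -/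
open MeasureTheory ENNReal

noncomputable def ft (f : ℝ → ℝ) (ξ : ℝ) : ℂ :=
  ∫ v : ℝ, (f v : ℂ) * Complex.exp (-(Complex.I * v * ξ))

noncomputable def dFour (s : ℝ) (f g : ℝ → ℝ) : ℝ≥0∞ :=
  ⨆ ξ : {x : ℝ // x ≠ 0}, ENNReal.ofReal (‖ft f ξ.1 - ft g ξ.1‖ / |ξ.1| ^ s)

def IsProbDensity (f : ℝ → ℝ) : Prop :=
  (∀ v, 0 ≤ f v) ∧ Integrable f ∧ ∫ v : ℝ, f v = 1

lemma exp_diff_le_rpow (A B θ : ℝ) (hB : 0 ≤ B) (hBA : B ≤ A)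
    (hθ0 : 0 < θ) (hθ1 : θ ≤ 1) :
    |Real.exp (-A) - Real.exp (-B)| ≤ (A - B) ^ θ := by
  have hval : |Real.exp (-A) - Real.exp (-B)| = Real.exp (-B) - Real.exp (-A) := by
    rw [abs_sub_comm, abs_of_nonneg]
    exact sub_nonneg.mpr (Real.exp_le_exp.mpr (by linarith))
  rw [hval]
  have h1 : Real.exp (-B) - Real.exp (-A) ≤ 1 := by
    have : Real.exp (-B) ≤ 1 := Real.exp_le_one_iff.mpr (by linarith)
    linarith [Real.exp_pos (-A)]
  have h2 : Real.exp (-B) - Real.exp (-A) ≤ A - B := by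
    have hb1 : Real.exp (-B) ≤ 1 := Real.exp_le_one_iff.mpr (by linarith)
    have key : Real.exp (-A) ≥ Real.exp (-B) * (1 - (A - B)) := by
      have := Real.add_one_le_exp (-(A - B))
      have hpos : 0 < Real.exp (-B) := Real.exp_pos _
      calc Real.exp (-B) * (1 - (A - B)) ≤ Real.exp (-B) * Real.exp (-(A-B)) := by
            apply mul_le_mul_of_nonneg_left _ hpos.le
            linarith
        _ = Real.exp (-A) := by rw [← Real.exp_add]; ring_nf
    nlinarith [Real.exp_pos (-B)]
  set x := A - B with hx
  have hx0 : 0 ≤ x := by linarith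
  rcases eq_or_lt_of_le hx0 with h | h
  · rw [← h]; simp [Real.zero_rpow hθ0.ne']; linarith
  rcases le_or_gt x 1 with hle | hgt
  · calc Real.exp (-B) - Real.exp (-A) ≤ x := h2
      _ = x ^ (1:ℝ) := (Real.rpow_one x).symm
      _ ≤ x ^ θ := Real.rpow_le_rpow_of_exponent_ge h hle hθ1
  · calc Real.exp (-B) - Real.exp (-A) ≤ 1 := h1
      _ ≤ x ^ θ := Real.one_le_rpow hgt.le hθ0.le

lemma ft_abs_le_one (f : ℝ → ℝ) (hf : IsProbDensity f) (ξ : ℝ) :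
    ‖ft f ξ‖ ≤ 1 := by
  obtain ⟨hpos, hint, hone⟩ := hf
  rw [ft]
  calc ‖∫ v : ℝ, (f v : ℂ) * Complex.exp (-(Complex.I * v * ξ))‖
      ≤ ∫ v : ℝ, ‖(f v : ℂ) * Complex.exp (-(Complex.I * v * ξ))‖ :=
        norm_integral_le_integral_norm _
    _ = ∫ v : ℝ, f v := by
        congr 1; funext v
        have he : -(Complex.I * v * ξ) = ((-(v * ξ) : ℝ) : ℂ) * Complex.I := by
          push_cast; ring
        rw [norm_mul, he,
          Complex.norm_exp_ofReal_mul_I, Complex.norm_real, Real.norm_eq_abs, abs_of_nonneg (hpos v), mul_one]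
    _ = 1 := hone

theorem rosenau_linnik_approx (lam s : ℝ) (hlam1 : 1 < lam) (hlam2 : lam < 2)
    (hs0 : 0 < s) (hs : s < lam) :
    ∃ C : ℝ, 0 < C ∧
      ∀ g₀ : ℝ → ℝ, IsProbDensity g₀ →
        ∀ t ε : ℝ, 0 < t → 0 < ε →
          ∀ g gε : ℝ → ℝ,
            (∀ ξ : ℝ, ft g ξ = (Real.exp (-(|ξ| ^ lam) * t) : ℂ) * ft g₀ ξ) →
            (∀ ξ : ℝ, ft gε ξ =
              (Real.exp (-(t * |ξ| ^ lam / (1 + (ε * |ξ|) ^ lam))) : ℂ) * ft g₀ ξ) →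
            dFour s g gε ≤ ENNReal.ofReal (C * t ^ (s / (2 * lam)) * ε ^ (s / 2)) := by
  refine ⟨1, one_pos, ?_⟩
  intro g₀ hg₀ t ε ht hε g gε hg hgε
  have hlam0 : (0:ℝ) < lam := by linarith
  set θ := s / (2 * lam) with hθdef
  have hθ0 : 0 < θ := div_pos hs0 (by linarith)
  have hθ1 : θ ≤ 1 := by
    rw [hθdef, div_le_one (by linarith)]; linarith
  rw [dFour]
  apply iSup_le
  rintro ⟨ξ, hξ⟩
  apply ENNReal.ofReal_le_ofReal
  have hxpos : (0:ℝ) < |ξ| := abs_pos.mpr hξ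
  have hxs : (0:ℝ) < |ξ| ^ s := Real.rpow_pos_of_pos hxpos s
  rw [div_le_iff₀ hxs]
  set a := |ξ| ^ lam with ha
  have ha0 : 0 < a := Real.rpow_pos_of_pos hxpos lam
  set c := (ε * |ξ|) ^ lam with hc
  have hc0 : 0 < c := Real.rpow_pos_of_pos (mul_pos hε hxpos) lam
  set A := a * t with hA
  set B := t * a / (1 + c) with hB
  have hA0 : 0 < A := mul_pos ha0 ht
  have hBA : B ≤ A := by
    rw [hB, hA, div_le_iff₀ (by linarith)]
    nlinarith
  have hB0 : 0 ≤ B := le_of_lt (div_pos (mul_pos ht ha0) (by linarith))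
  -- rewrite the difference
  have hdiff : ft g ξ - ft gε ξ
      = ((Real.exp (-A) - Real.exp (-B) : ℝ) : ℂ) * ft g₀ ξ := by
    rw [hg ξ, hgε ξ, ← sub_mul]
    have e1 : Real.exp (-(|ξ| ^ lam) * t) = Real.exp (-A) := by
      rw [hA]; congr 1; ring
    have e2 : Real.exp (-(t * |ξ| ^ lam / (1 + (ε * |ξ|) ^ lam))) = Real.exp (-B) := rfl
    rw [e1, e2]
    push_cast
    ring
  rw [hdiff, norm_mul, Complex.norm_real, Real.norm_eq_abs]
  have hft1 := ft_abs_le_one g₀ hg₀ ξ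
  have hAB : A - B ≤ t * (ε ^ lam) * |ξ| ^ (2 * lam) := by
    have h1 : A - B = t * a * (c / (1 + c)) := by
      rw [hA, hB]; field_simp; ring
    have h2 : c / (1 + c) ≤ c := by
      rw [div_le_iff₀ (by linarith)]; nlinarith
    have h3 : c = ε ^ lam * a := by
      rw [hc, ha, Real.mul_rpow hε.le (abs_nonneg ξ)]
    have h4 : a * a = |ξ| ^ (2 * lam) := by
      rw [ha, ← Real.rpow_add hxpos]; ring_nf
    calc A - B = t * a * (c / (1 + c)) := h1
      _ ≤ t * a * c := by
          apply mul_le_mul_of_nonneg_left h2 (by positivity)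
      _ = t * ε ^ lam * (a * a) := by rw [h3]; ring
      _ = t * ε ^ lam * |ξ| ^ (2 * lam) := by rw [h4]
  have hexp : |Real.exp (-A) - Real.exp (-B)| ≤ (A - B) ^ θ :=
    exp_diff_le_rpow A B θ hB0 hBA hθ0 hθ1
  have hrpow : (A - B) ^ θ ≤ t ^ θ * ε ^ (s / 2) * |ξ| ^ s := by
    calc (A - B) ^ θ ≤ (t * ε ^ lam * |ξ| ^ (2 * lam)) ^ θ :=
          Real.rpow_le_rpow (by linarith) hAB hθ0.le
      _ = t ^ θ * (ε ^ lam) ^ θ * (|ξ| ^ (2 * lam)) ^ θ := by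
          rw [Real.mul_rpow (by positivity) (by positivity),
            Real.mul_rpow ht.le (by positivity)]
      _ = t ^ θ * ε ^ (s / 2) * |ξ| ^ s := by
          rw [← Real.rpow_mul hε.le, ← Real.rpow_mul (abs_nonneg ξ)]
          have e1 : lam * θ = s / 2 := by
            rw [hθdef]; field_simp
          have e2 : 2 * lam * θ = s := by
            rw [hθdef]; field_simp
          rw [e1, e2]
  calc |Real.exp (-A) - Real.exp (-B)| * ‖ft g₀ ξ‖
      ≤ (A - B) ^ θ * 1 := by
        exact mul_le_mul hexp hft1 (norm_nonneg _)
          (Real.rpow_nonneg (by linarith) θ)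
    _ = (A - B) ^ θ := mul_one _
    _ ≤ t ^ θ * ε ^ (s / 2) * |ξ| ^ s := hrpow
    _ = 1 * t ^ θ * ε ^ (s / 2) * |ξ| ^ s := by ring
end

section
/- Let F be a distribution (probability measure) on ℝ with characteristic function Φ satisfying 1 - Φ(ξ) = (1 + v₀(ξ))|ξ|^λ where v₀ ∈ L^∞ and |v₀(ξ)| ≤ C|ξ|^δ for small |ξ|, with 1 < λ < 2 and δ > 0. Let g₀ be a probability density, ĝ(ξ,t) = e^{-|ξ|^λ t} ĝ₀(ξ), and ĝ_ε(ξ,t) = e^{-ε^{-λ} t (1-Φ(εξ))} ĝ₀(ξ). Then for any 0 < s < λ there is a constant C = C(λ,s,δ) such that d_s(g(t), g_ε(t)) ≤ C t^{s/(λ+δ)} ε^{sδ/(λ+δ)}. -/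
open MeasureTheory ENNReal

lemma exp_neg_lip {x y : ℂ} (hx : 0 ≤ x.re) (hy : 0 ≤ y.re) :
    ‖Complex.exp (-x) - Complex.exp (-y)‖ ≤ ‖x - y‖ := by
  have h := Convex.norm_image_sub_le_of_norm_hasFDerivWithin_le
    (f := fun w : ℂ => Complex.exp (-w))
    (f' := fun w : ℂ => ContinuousLinearMap.smulRight (1 : ℂ →L[ℂ] ℂ) (-Complex.exp (-w)))
    (s := {c : ℂ | 0 ≤ c.re}) (C := 1)
    (fun w _ => by
      have : HasDerivAt (fun w : ℂ => Complex.exp (-w)) (-Complex.exp (-w)) w := by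
        simpa using (hasDerivAt_neg w).cexp
      exact this.hasFDerivAt.hasFDerivWithinAt)
    (fun w hw => by
      rw [ContinuousLinearMap.norm_smulRight_apply, norm_one, one_mul,
        norm_neg, Complex.norm_exp]
      simp only [Complex.neg_re]
      exact Real.exp_le_one_iff.mpr (by simpa using hw))
    (convex_halfSpace_re_ge 0) hy hx
  simpa using h

lemma abs_ft_le_one {g₀ : ℝ → ℝ} (h : IsProbDensity g₀) (ξ : ℝ) :
    ‖ft g₀ ξ‖ ≤ 1 := by
  calc ‖ft g₀ ξ‖
      ≤ ∫ v : ℝ, ‖(g₀ v : ℂ) * Complex.exp (-(Complex.I * v * ξ))‖ := by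
        exact norm_integral_le_integral_norm _
    _ = ∫ v : ℝ, g₀ v := by
        congr 1; funext v
        rw [norm_mul, Complex.norm_exp]
        simp [abs_of_nonneg (h.1 v), Complex.mul_re, Complex.mul_im]
    _ = 1 := h.2.2

lemma abs_phi_le_one (μ : Measure ℝ) [IsProbabilityMeasure μ]
    (Φ : ℝ → ℂ) (hΦ : ∀ ξ : ℝ, Φ ξ = ∫ v : ℝ, Complex.exp (-(Complex.I * v * ξ)) ∂μ)
    (ξ : ℝ) : ‖Φ ξ‖ ≤ 1 := by
  rw [hΦ]
  calc ‖∫ v : ℝ, Complex.exp (-(Complex.I * v * ξ)) ∂μ‖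
      ≤ ∫ v : ℝ, ‖Complex.exp (-(Complex.I * v * ξ))‖ ∂μ := by
        exact norm_integral_le_integral_norm _
    _ = ∫ _ : ℝ, (1:ℝ) ∂μ := by
        congr 1; funext v
        rw [Complex.norm_exp]
        simp [Complex.mul_re, Complex.mul_im]
    _ = 1 := by simp

theorem rosenau_general_approx (lam δ : ℝ) (hlam1 : 1 < lam) (hlam2 : lam < 2)
    (hδ : 0 < δ)
    (μ : Measure ℝ) [IsProbabilityMeasure μ]
    (Φ : ℝ → ℂ) (hΦ : ∀ ξ : ℝ, Φ ξ = ∫ v : ℝ, Complex.exp (-(Complex.I * v * ξ)) ∂μ)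
    (v₀ : ℝ → ℂ)
    (hexp : ∀ ξ : ℝ, 1 - Φ ξ = (1 + v₀ ξ) * (|ξ| ^ lam : ℝ))
    (B : ℝ) (hB : ∀ ξ : ℝ, ‖v₀ ξ‖ ≤ B)
    (C₀ r : ℝ) (hr : 0 < r) (hsmall : ∀ ξ : ℝ, |ξ| ≤ r → ‖v₀ ξ‖ ≤ C₀ * |ξ| ^ δ) :
    ∀ s : ℝ, 0 < s → s < lam →
      ∃ C : ℝ, 0 < C ∧
        ∀ g₀ : ℝ → ℝ, IsProbDensity g₀ →
          ∀ t ε : ℝ, 0 < t → 0 < ε →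
            ∀ g gε : ℝ → ℝ,
              (∀ ξ : ℝ, ft g ξ = (Real.exp (-(|ξ| ^ lam) * t) : ℂ) * ft g₀ ξ) →
              (∀ ξ : ℝ, ft gε ξ =
                Complex.exp (-(ε ^ (-lam) * t : ℝ) * (1 - Φ (ε * ξ))) * ft g₀ ξ) →
              dFour s g gε ≤
                ENNReal.ofReal (C * t ^ (s / (lam + δ)) * ε ^ (s * δ / (lam + δ))) := by
  intro s hs hslam
  have hld : 0 < lam + δ := by linarith
  set κ : ℝ := s / (lam + δ) with hκdef
  have hκ : 0 < κ := div_pos hs hld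
  have hB0 : 0 ≤ B := le_trans (norm_nonneg _) (hB 0)
  have hrδ : 0 < r ^ δ := Real.rpow_pos_of_pos hr δ
  set C₁ : ℝ := max (max C₀ (B / r ^ δ)) 1 with hC₁def
  have hC₁1 : (1:ℝ) ≤ C₁ := le_max_right _ _
  have hC₁pos : 0 < C₁ := lt_of_lt_of_le one_pos hC₁1
  -- uniform bound on v₀
  have hv : ∀ w : ℝ, ‖v₀ w‖ ≤ C₁ * |w| ^ δ := by
    intro w
    have hwδ : (0:ℝ) ≤ |w| ^ δ := Real.rpow_nonneg (abs_nonneg w) δ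
    rcases le_or_gt |w| r with hw | hw
    · exact le_trans (hsmall w hw)
        (mul_le_mul_of_nonneg_right (le_trans (le_max_left _ _) (le_max_left _ _)) hwδ)
    · have h1 : B ≤ (B / r ^ δ) * |w| ^ δ := by
        rw [div_mul_eq_mul_div, le_div_iff₀ hrδ]
        exact mul_le_mul_of_nonneg_left
          (Real.rpow_le_rpow hr.le hw.le hδ.le) hB0
      exact le_trans (hB w) (le_trans h1
        (mul_le_mul_of_nonneg_right (le_trans (le_max_right _ _) (le_max_left _ _)) hwδ))
  refine ⟨2 * C₁ ^ κ, by positivity, ?_⟩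
  intro g₀ hg₀ t ε ht hε g gε hg hgε
  set A : ℝ := C₁ * t * ε ^ δ with hAdef
  have hApos : 0 < A := by positivity
  set R : ℝ := A ^ (-(1:ℝ)/(lam+δ)) with hRdef
  have hRpos : 0 < R := Real.rpow_pos_of_pos hApos _
  have hR1 : A * R ^ (lam + δ - s) = A ^ κ := by
    rw [hRdef, ← Real.rpow_mul hApos.le]
    nth_rewrite 1 [← Real.rpow_one A]
    rw [← Real.rpow_add hApos, hκdef]
    congr 1
    field_simp
    ring
  have hR2 : R ^ (-s) = A ^ κ := by
    rw [hRdef, ← Real.rpow_mul hApos.le, hκdef]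
    congr 1
    field_simp
  have key : ∀ ξv : ℝ, ξv ≠ 0 →
      ‖ft g ξv - ft gε ξv‖ / |ξv| ^ s ≤ 2 * A ^ κ := by
    intro ξv hne
    have hξpos : 0 < |ξv| := abs_pos.mpr hne
    have hξs : 0 < |ξv| ^ s := Real.rpow_pos_of_pos hξpos s
    set x : ℂ := ((|ξv| ^ lam * t : ℝ) : ℂ) with hxdef
    set z : ℂ := ((ε ^ (-lam) * t : ℝ) : ℂ) * (1 - Φ (ε * ξv)) with hzdef
    have hgx : ft g ξv = Complex.exp (-x) * ft g₀ ξv := by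
      rw [hg ξv, Complex.ofReal_exp]
      congr 2
      rw [hxdef]
      push_cast
      ring
    have hgεx : ft gε ξv = Complex.exp (-z) * ft g₀ ξv := by
      rw [hgε ξv]
      congr 2
      rw [hzdef]
      push_cast
      ring
    have hxre : 0 ≤ x.re := by
      rw [hxdef, Complex.ofReal_re]
      positivity
    have hzre : 0 ≤ z.re := by
      rw [hzdef, Complex.re_ofReal_mul]
      apply mul_nonneg (by positivity)
      have h1 : (Φ (ε * ξv)).re ≤ 1 :=
        le_trans (Complex.re_le_norm _) (abs_phi_le_one μ Φ hΦ _)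
      simp only [Complex.sub_re, Complex.one_re]
      linarith
    have hdiff : ft g ξv - ft gε ξv = (Complex.exp (-x) - Complex.exp (-z)) * ft g₀ ξv := by
      rw [hgx, hgεx]; ring
    have hεlam : (0:ℝ) < ε ^ lam := Real.rpow_pos_of_pos hε lam
    have hc : ((ε ^ (-lam) * t : ℝ) : ℂ) * ((ε ^ lam * |ξv| ^ lam : ℝ) : ℂ)
        = ((|ξv| ^ lam * t : ℝ) : ℂ) := by
      have : (ε ^ (-lam) * t) * (ε ^ lam * |ξv| ^ lam) = |ξv| ^ lam * t := by
        rw [Real.rpow_neg hε.le]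
        field_simp
      rw [← Complex.ofReal_mul, this]
    have hxz : x - z = -(((|ξv| ^ lam * t : ℝ) : ℂ) * v₀ (ε * ξv)) := by
      rw [hzdef, hxdef, hexp (ε * ξv), abs_mul, abs_of_pos hε,
        Real.mul_rpow hε.le (abs_nonneg _)]
      linear_combination -(1 + v₀ (ε * ξv)) * hc
    have habsg₀ : ‖ft g₀ ξv‖ ≤ 1 := abs_ft_le_one hg₀ ξv
    have hNa : ‖ft g ξv - ft gε ξv‖
        ≤ (|ξv| ^ lam * t) * ‖v₀ (ε * ξv)‖ := by
      rw [hdiff, norm_mul]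
      calc ‖Complex.exp (-x) - Complex.exp (-z)‖ * ‖ft g₀ ξv‖
          ≤ ‖x - z‖ * 1 :=
            mul_le_mul (exp_neg_lip hxre hzre) habsg₀ (norm_nonneg _)
              (norm_nonneg _)
        _ = (|ξv| ^ lam * t) * ‖v₀ (ε * ξv)‖ := by
            rw [mul_one, hxz, norm_neg, norm_mul, Complex.norm_real, Real.norm_eq_abs,
              abs_of_nonneg (by positivity)]
    have hN2 : ‖ft g ξv - ft gε ξv‖ ≤ 2 := by
      rw [hdiff, norm_mul]
      have e1 : ‖Complex.exp (-x)‖ ≤ 1 := by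
        rw [Complex.norm_exp, Complex.neg_re]
        exact Real.exp_le_one_iff.mpr (by linarith)
      have e2 : ‖Complex.exp (-z)‖ ≤ 1 := by
        rw [Complex.norm_exp, Complex.neg_re]
        exact Real.exp_le_one_iff.mpr (by linarith)
      calc ‖Complex.exp (-x) - Complex.exp (-z)‖ * ‖ft g₀ ξv‖
          ≤ (‖Complex.exp (-x)‖ + ‖Complex.exp (-z)‖) * 1 := by
            apply mul_le_mul _ habsg₀ (norm_nonneg _) (by positivity)
            exact le_trans (norm_sub_le _ _) le_rfl
        _ ≤ 2 := by linarith [mul_one (‖Complex.exp (-x)‖ + ‖Complex.exp (-z)‖)]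
    have hNb : ‖ft g ξv - ft gε ξv‖ ≤ A * |ξv| ^ (lam + δ) := by
      have hv' : ‖v₀ (ε * ξv)‖ ≤ C₁ * (ε ^ δ * |ξv| ^ δ) := by
        have h := hv (ε * ξv)
        rwa [abs_mul, abs_of_pos hε, Real.mul_rpow hε.le (abs_nonneg _)] at h
      calc ‖ft g ξv - ft gε ξv‖
          ≤ (|ξv| ^ lam * t) * ‖v₀ (ε * ξv)‖ := hNa
        _ ≤ (|ξv| ^ lam * t) * (C₁ * (ε ^ δ * |ξv| ^ δ)) :=
            mul_le_mul_of_nonneg_left hv' (by positivity)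
        _ = A * |ξv| ^ (lam + δ) := by
            rw [hAdef, Real.rpow_add hξpos]
            ring
    rw [div_le_iff₀ hξs]
    rcases le_or_gt |ξv| R with hle | hlt
    · have hsplit : |ξv| ^ (lam + δ) = |ξv| ^ (lam + δ - s) * |ξv| ^ s := by
        rw [← Real.rpow_add hξpos]
        congr 1
        ring
      have hmono : |ξv| ^ (lam + δ - s) ≤ R ^ (lam + δ - s) :=
        Real.rpow_le_rpow (abs_nonneg _) hle (by linarith)
      calc ‖ft g ξv - ft gε ξv‖
          ≤ A * (|ξv| ^ (lam + δ - s) * |ξv| ^ s) := by rw [← hsplit]; exact hNb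
        _ ≤ A * (R ^ (lam + δ - s) * |ξv| ^ s) := by
            apply mul_le_mul_of_nonneg_left _ hApos.le
            exact mul_le_mul_of_nonneg_right hmono hξs.le
        _ = A * R ^ (lam + δ - s) * |ξv| ^ s := by ring
        _ = A ^ κ * |ξv| ^ s := by rw [hR1]
        _ ≤ 2 * A ^ κ * |ξv| ^ s := by
            have : (0:ℝ) ≤ A ^ κ * |ξv| ^ s := by positivity
            nlinarith
    · have h1 : R ^ s ≤ |ξv| ^ s := Real.rpow_le_rpow hRpos.le hlt.le hs.le
      have h2 : R ^ (-s) * R ^ s = 1 := by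
        rw [← Real.rpow_add hRpos]
        simp
      have h3 : (0:ℝ) < R ^ (-s) := Real.rpow_pos_of_pos hRpos _
      calc ‖ft g ξv - ft gε ξv‖ ≤ 2 := hN2
        _ ≤ 2 * A ^ κ * |ξv| ^ s := by
            rw [← hR2]
            nlinarith
  have hfinal : 2 * A ^ κ = 2 * C₁ ^ κ * t ^ κ * ε ^ (s * δ / (lam + δ)) := by
    have hδκ : δ * κ = s * δ / (lam + δ) := by rw [hκdef]; ring
    rw [hAdef, Real.mul_rpow (by positivity) (by positivity),
      Real.mul_rpow hC₁pos.le ht.le, ← Real.rpow_mul hε.le, hδκ]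
    ring
  unfold dFour
  refine iSup_le fun ξ => ?_
  exact ENNReal.ofReal_le_ofReal (le_trans (key ξ.1 ξ.2) hfinal.le)
end

section
/- Let 1 < λ < 2, let g₀ be a probability density with d_s(g₀, L_λ) < ∞ for some 0 < s < λ, and define the scaled solutions ĥ(ξ,t) = e^{-t|ξ|^λ/(1+t)} ĝ₀(ξ/(1+t)^{1/λ}) and ĥ_ε(ξ,t) = e^{-t|ξ|^λ/(1+t+ε^λ|ξ|^λ)} ĝ₀(ξ/(1+t)^{1/λ}). Then there exists C = C(λ,s) > 0 such that d_s(h_ε(t), L_λ) ≤ C( (1+t)^{-s/λ} + ε^{s/2} t^{s/(2λ)} (1+t)^{-s/λ} ) for all t > 0. -/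
open MeasureTheory ENNReal

lemma min_one_le_rpow {x θ : ℝ} (hx : 0 ≤ x) (hθ0 : 0 < θ) (hθ1 : θ ≤ 1) :
    min 1 x ≤ x ^ θ := by
  rcases le_or_gt x 1 with h | h
  · rcases eq_or_lt_of_le hx with h0 | h0
    · simp [← h0, Real.zero_rpow hθ0.ne']
    · calc min 1 x ≤ x := min_le_right _ _
        _ = x ^ (1:ℝ) := (Real.rpow_one x).symm
        _ ≤ x ^ θ := Real.rpow_le_rpow_of_exponent_ge h0 h hθ1
  · calc min 1 x ≤ 1 := min_le_left _ _
      _ ≤ x ^ θ := Real.one_le_rpow h.le hθ0.le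

lemma exp_sub_exp_le {A B : ℝ} (hA : 0 ≤ A) (hAB : A ≤ B) :
    Real.exp (-A) - Real.exp (-B) ≤ min 1 (B - A) := by
  have h1 : Real.exp (-A) ≤ 1 := by
    simpa using Real.exp_le_exp.mpr (neg_nonpos.mpr hA)
  have h2 : (0:ℝ) < Real.exp (-B) := Real.exp_pos _
  apply le_min
  · linarith
  · have e1 := Real.add_one_le_exp (-(B - A))
    have e2 : Real.exp (-A) * Real.exp (-(B - A)) = Real.exp (-B) := by
      rw [← Real.exp_add]; ring_nf
    have h3 : 0 < Real.exp (-(B - A)) := Real.exp_pos _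
    nlinarith

set_option maxHeartbeats 1000000 in
theorem scaled_rosenau_converges_to_levy (lam s : ℝ)
    (hlam1 : 1 < lam) (hlam2 : lam < 2) (hs0 : 0 < s) (hs : s < lam)
    (L : ℝ → ℝ) (hL : IsProbDensity L)
    (hLft : ∀ ξ : ℝ, ft L ξ = (Real.exp (-(|ξ| ^ lam)) : ℂ))
    (g₀ : ℝ → ℝ) (hg₀ : IsProbDensity g₀)
    (hd : dFour s g₀ L < ⊤) :
    ∃ C : ℝ, 0 < C ∧
      ∀ ε : ℝ, 0 < ε → ∀ t : ℝ, 0 < t →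
        ∀ hε : ℝ → ℝ,
          (∀ ξ : ℝ, ft hε ξ =
            (Real.exp (-(t * |ξ| ^ lam / (1 + t + ε ^ lam * |ξ| ^ lam))) : ℂ) *
              ft g₀ (ξ / (1 + t) ^ (1 / lam))) →
          dFour s hε L ≤
            ENNReal.ofReal (C * ((1 + t) ^ (-(s / lam))
              + ε ^ (s / 2) * t ^ (s / (2 * lam)) * (1 + t) ^ (-(s / lam)))) := by
  have hlam0 : (0:ℝ) < lam := by linarith
  set D : ℝ := (dFour s g₀ L).toReal with hDdef
  have hD0 : 0 ≤ D := ENNReal.toReal_nonneg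
  have hDle : ∀ η : ℝ, η ≠ 0 → ‖ft g₀ η - ft L η‖ ≤ D * |η| ^ s := by
    intro η hη
    have h1 : ENNReal.ofReal (‖ft g₀ η - ft L η‖ / |η| ^ s) ≤ dFour s g₀ L :=
      le_iSup (fun ξ : {x : ℝ // x ≠ 0} =>
        ENNReal.ofReal (‖ft g₀ ξ.1 - ft L ξ.1‖ / |ξ.1| ^ s)) ⟨η, hη⟩
    rw [(ENNReal.ofReal_toReal hd.ne).symm] at h1
    have h3 : ‖ft g₀ η - ft L η‖ / |η| ^ s ≤ D :=
      (ENNReal.ofReal_le_ofReal_iff hD0).mp h1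
    have hpos : (0:ℝ) < |η| ^ s := Real.rpow_pos_of_pos (abs_pos.mpr hη) s
    calc ‖ft g₀ η - ft L η‖
        = ‖ft g₀ η - ft L η‖ / |η| ^ s * |η| ^ s := by
          field_simp
      _ ≤ D * |η| ^ s := by
          apply mul_le_mul_of_nonneg_right h3 hpos.le
  refine ⟨D + 1, by linarith, ?_⟩
  intro ε hε t ht hεf hft
  have hu : (0:ℝ) < 1 + t := by linarith
  set θ : ℝ := s / (2 * lam) with hθdef
  have hθ0 : 0 < θ := by positivity
  have hθ1 : θ ≤ 1 := by
    rw [hθdef, div_le_one (by linarith)]; linarith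
  rw [dFour]
  apply iSup_le
  rintro ⟨ξ, hξ⟩
  apply ENNReal.ofReal_le_ofReal
  have haξ : (0:ℝ) < |ξ| := abs_pos.mpr hξ
  have hr : (0:ℝ) < (1 + t) ^ (1 / lam) := Real.rpow_pos_of_pos hu _
  set η : ℝ := ξ / (1 + t) ^ (1 / lam) with hηdef
  have hη : η ≠ 0 := div_ne_zero hξ hr.ne'
  have habsη : |η| = |ξ| / (1 + t) ^ (1 / lam) := by
    rw [hηdef, abs_div, abs_of_pos hr]
  have hrpow : ∀ r : ℝ, ((1 + t) ^ (1 / lam)) ^ r = (1 + t) ^ (r / lam) := by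
    intro r
    rw [← Real.rpow_mul hu.le]
    congr 1
    field_simp
  have hetalam : |η| ^ lam = |ξ| ^ lam / (1 + t) := by
    rw [habsη, Real.div_rpow (abs_nonneg _) hr.le, hrpow]
    congr 1
    rw [div_self hlam0.ne', Real.rpow_one]
  have hηs : |η| ^ s = |ξ| ^ s * (1 + t) ^ (-(s / lam)) := by
    rw [habsη, Real.div_rpow (abs_nonneg _) hr.le, hrpow,
      Real.rpow_neg hu.le, div_eq_mul_inv]
  set p : ℝ := |ξ| ^ lam with hpdef
  have hp : (0:ℝ) < p := Real.rpow_pos_of_pos haξ _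
  set q : ℝ := ε ^ lam with hqdef
  have hq : (0:ℝ) < q := Real.rpow_pos_of_pos hε _
  set A : ℝ := t * p / (1 + t + q * p) with hAdef
  set B : ℝ := t * p / (1 + t) with hBdef
  have hA0 : 0 ≤ A := by positivity
  have hAB : A ≤ B := by
    rw [hAdef, hBdef, div_le_div_iff₀ (by positivity) hu]
    nlinarith [mul_pos hq hp, mul_nonneg ht.le hp.le]
  set Eε : ℝ := Real.exp (-A) with hEεdef
  set E : ℝ := Real.exp (-B) with hEdef
  -- splitting
  have hEmul : E * Real.exp (-(|η| ^ lam)) = Real.exp (-(|ξ| ^ lam)) := by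
    rw [hEdef, ← Real.exp_add, hetalam]
    congr 1
    rw [hBdef, ← hpdef]
    field_simp
    ring
  have hsplit : ft hεf ξ - ft L ξ =
      ((Eε - E : ℝ) : ℂ) * ft g₀ η + (E : ℂ) * (ft g₀ η - ft L η) := by
    have hEεeq : Real.exp (-(t * |ξ| ^ lam / (1 + t + q * |ξ| ^ lam))) = Eε := by
      rw [hEεdef, hAdef, hpdef]
    have hc : ((Real.exp (-(|ξ| ^ lam)) : ℝ) : ℂ) =
        (E : ℂ) * ((Real.exp (-(|η| ^ lam)) : ℝ) : ℂ) := by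
      rw [← Complex.ofReal_mul, hEmul]
    rw [hft ξ, hLft ξ, hLft η, hEεeq, hc, Complex.ofReal_sub]
    ring
  -- bound the two pieces
  have habs1 : ‖ft hεf ξ - ft L ξ‖ ≤
      (Eε - E) * 1 + 1 * (D * |η| ^ s) := by
    rw [hsplit]
    calc ‖((Eε - E : ℝ) : ℂ) * ft g₀ η + (E : ℂ) * (ft g₀ η - ft L η)‖
        ≤ ‖((Eε - E : ℝ) : ℂ) * ft g₀ η‖
          + ‖(E : ℂ) * (ft g₀ η - ft L η)‖ := by
          apply norm_add_le
      _ = |Eε - E| * ‖ft g₀ η‖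
          + |E| * ‖ft g₀ η - ft L η‖ := by
          rw [norm_mul, norm_mul, Complex.norm_real, Complex.norm_real, Real.norm_eq_abs, Real.norm_eq_abs]
      _ ≤ (Eε - E) * 1 + 1 * (D * |η| ^ s) := by
          have h1 : E ≤ Eε := Real.exp_le_exp.mpr (neg_le_neg hAB)
          have h2 : |Eε - E| = Eε - E := abs_of_nonneg (by linarith)
          have h3 : |E| ≤ 1 := by
            rw [abs_of_pos (Real.exp_pos _)]
            simpa using Real.exp_le_exp.mpr (neg_nonpos.mpr (hA0.trans hAB))
          rw [h2]
          apply add_le_add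
          · exact mul_le_mul_of_nonneg_left (ft_abs_le_one g₀ hg₀ η) (by linarith)
          · exact mul_le_mul h3 (hDle η hη) (norm_nonneg _) zero_le_one
  -- bound Eε - E by the rpow expression
  set X : ℝ := q * t * p ^ 2 / (1 + t) ^ 2 with hXdef
  have hX0 : 0 ≤ X := by positivity
  have hdenom : (0:ℝ) < 1 + t + q * p := by nlinarith [mul_pos hq hp]
  have hBAX : B - A ≤ X := by
    have key : B - A = q * t * p ^ 2 / ((1 + t) * (1 + t + q * p)) := by
      rw [hBdef, hAdef]
      field_simp
      ring
    have hXeq : X = q * t * p ^ 2 / ((1 + t) * (1 + t)) := by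
      rw [hXdef]; ring_nf
    rw [key, hXeq]
    apply div_le_div_of_nonneg_left (by positivity) (by positivity)
    nlinarith [mul_pos hq hp]
  have hEEX : Eε - E ≤ X ^ θ := by
    calc Eε - E ≤ min 1 (B - A) := exp_sub_exp_le hA0 hAB
      _ ≤ min 1 X := by
          apply min_le_min le_rfl hBAX
      _ ≤ X ^ θ := min_one_le_rpow hX0 hθ0 hθ1
  have hXθ : X ^ θ = ε ^ (s / 2) * t ^ θ * (|ξ| ^ s * (1 + t) ^ (-(s / lam))) := by
    have hp2 : p ^ 2 = |ξ| ^ (2 * lam) := by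
      rw [hpdef, ← Real.rpow_natCast (|ξ| ^ lam) 2, ← Real.rpow_mul (abs_nonneg ξ)]
      norm_num [mul_comm]
    have hu2 : (1 + t) ^ 2 = (1 + t) ^ (2:ℝ) := by
      rw [← Real.rpow_natCast (1 + t) 2]; norm_num
    rw [hXdef, hp2, hu2, Real.div_rpow (by positivity) (by positivity),
      Real.mul_rpow (by positivity) (by positivity),
      Real.mul_rpow hq.le ht.le,
      hqdef, ← Real.rpow_mul hε.le, ← Real.rpow_mul (abs_nonneg ξ),
      ← Real.rpow_mul hu.le]
    have e1 : lam * θ = s / 2 := by rw [hθdef]; field_simp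
    have e2 : 2 * lam * θ = s := by rw [hθdef]; field_simp
    have e3 : (2:ℝ) * θ = s / lam := by rw [hθdef]; field_simp
    rw [e1, e2, e3, Real.rpow_neg hu.le, div_eq_mul_inv]
    ring
  -- final assembly
  rw [div_le_iff₀ (Real.rpow_pos_of_pos haξ s)]
  have hP : (0:ℝ) ≤ (1 + t) ^ (-(s / lam)) := Real.rpow_nonneg hu.le _
  have has : (0:ℝ) ≤ |ξ| ^ s := Real.rpow_nonneg (abs_nonneg ξ) _
  have hQ : (0:ℝ) ≤ ε ^ (s / 2) * t ^ θ := by positivity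
  have habs2 : ‖ft hεf ξ - ft L ξ‖ ≤
      ε ^ (s / 2) * t ^ θ * (|ξ| ^ s * (1 + t) ^ (-(s / lam)))
      + D * (|ξ| ^ s * (1 + t) ^ (-(s / lam))) := by
    calc ‖ft hεf ξ - ft L ξ‖ ≤ (Eε - E) * 1 + 1 * (D * |η| ^ s) := habs1
      _ = (Eε - E) + D * |η| ^ s := by ring
      _ ≤ X ^ θ + D * |η| ^ s := by linarith
      _ = ε ^ (s / 2) * t ^ θ * (|ξ| ^ s * (1 + t) ^ (-(s / lam)))
          + D * (|ξ| ^ s * (1 + t) ^ (-(s / lam))) := by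
          rw [hXθ, hηs]
  nlinarith [mul_nonneg hP has, mul_nonneg (mul_nonneg (mul_nonneg hD0 hQ) hP) has,
    mul_nonneg hQ (mul_nonneg has hP)]
end
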